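/- Let S ⊆ (0,∞) be a countable set of positive reals and let M be a countable metric space such that (i) the finite metric subspaces of M are, up to isometry, exactly the finite ultrametric spaces all of whose nonzero distances lie in S, and (ii) M is ultrahomogeneous, i.e., every isometry between two finite subsets of M extends to a surjective isometry of M onto itself. Then M is isometric to Q_S. -/

import Mathlib

/-- The ultrametric Urysohn space with distances in `S`, realized as the
set of finitely supported functions from `S` to `ℕ`. -/
def QS (S : Set ℝ) : Type := {x : S → ℕ // (Function.support x).Finite}

/-- The ultrametric on `QS S`: the largest `s ∈ S` at which `x` and `y`
differ, and `0` if `x = y` (the supremum of the empty set of reals is `0`). -/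
noncomputable def qdist (S : Set ℝ) (x y : QS S) : ℝ :=
  sSup (Subtype.val '' {s : S | x.1 s ≠ y.1 s})

/-- `Y ⊆ QS S'` is an isometric copy of `X ⊆ QS S`. -/
def IsCopyIn (S S' : Set ℝ) (X : Set (QS S)) (Y : Set (QS S')) : Prop :=
  ∃ e : X → QS S', Function.Injective e ∧ Set.range e = Y ∧
    ∀ a b : X, qdist S' (e a) (e b) = qdist S a.1 b.1

/-- `X` is an isometric copy of `QS S` inside `QS S`. -/
def IsCopyOfQS (S : Set ℝ) (X : Set (QS S)) : Prop :=
  ∃ e : QS S → QS S, Function.Injective e ∧ Set.range e = X ∧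
    ∀ x y, qdist S (e x) (e y) = qdist S x y

/-- The reverse order `>` well-orders `S`: every nonempty subset of `S`
has a greatest element. -/
def RevWellOrdered (S : Set ℝ) : Prop :=
  ∀ T ⊆ S, T.Nonempty → ∃ m ∈ T, ∀ t ∈ T, t ≤ m

/-- `b` is a metric ball of `QS S` with radius `r ∈ S ∪ {0}`. -/
def IsBall (S : Set ℝ) (b : Set (QS S)) (r : ℝ) : Prop :=
  (r ∈ S ∨ r = 0) ∧ ∃ x : QS S, b = {y | qdist S x y ≤ r}

/-- `r⁻`: the greatest element of `S` below `r` (and `0` if there is none). -/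
noncomputable def rminus (S : Set ℝ) (r : ℝ) : ℝ := sSup {t | t ∈ S ∧ t < r}

/-- `A` is small in the ball `b` of radius `r`. -/
def SmallIn (S : Set ℝ) (A b : Set (QS S)) (r : ℝ) : Prop :=
  (r = 0 ∧ A ∩ b = ∅) ∨
  (0 < r ∧ ∃ F : Finset (QS S), A ∩ b ⊆ ⋃ c ∈ F, {y | qdist S c y ≤ rminus S r})

/-- `χ` admits at most `l` values on copies of `X` inside a copy of `QS S'`,
for every coloring with `k` colors. -/
def BRDbound (S S' : Set ℝ) (X : Set (QS S)) (l : ℕ) : Prop :=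
  ∀ k : ℕ, 0 < k → ∀ χ : Set (QS S') → Fin k,
    ∃ Q : Set (QS S'), IsCopyOfQS S' Q ∧
      (χ '' {Y | IsCopyIn S S' X Y ∧ Y ⊆ Q}).ncard ≤ l

/-- `X ⊆ QS S` has big Ramsey degree `l` in `U_{S'}`. -/
def HasBigRamseyDegree (S S' : Set ℝ) (X : Set (QS S)) (l : ℕ) : Prop :=
  IsLeast {m : ℕ | 0 < m ∧ BRDbound S S' X m} l

namespace Aux17
variable {S : Set ℝ}

lemma qs_ext {x y : QS S} (h : ∀ s, x.1 s = y.1 s) : x = y :=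
  Subtype.ext (funext h)

lemma diff_finite (x y : QS S) : (Subtype.val '' {s : S | x.1 s ≠ y.1 s}).Finite := by
  apply Set.Finite.image
  apply Set.Finite.subset (x.2.union y.2)
  intro s hs
  simp only [Set.mem_setOf_eq] at hs
  by_contra hc
  simp only [Set.mem_union, Function.mem_support, not_or, not_not] at hc
  exact hs (hc.1.trans hc.2.symm)

lemma qdist_self (x : QS S) : qdist S x x = 0 := by
  have : {s : S | x.1 s ≠ x.1 s} = ∅ := by ext s; simp
  simp [qdist, this, Real.sSup_empty]

lemma qdist_comm (x y : QS S) : qdist S x y = qdist S y x := by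
  unfold qdist
  congr 1
  ext s
  simp [ne_comm]

lemma qdist_mem {x y : QS S} (h : x ≠ y) :
    qdist S x y ∈ Subtype.val '' {s : S | x.1 s ≠ y.1 s} := by
  apply Set.Nonempty.csSup_mem _ (diff_finite x y)
  rcases not_forall.1 (fun hh => h (qs_ext hh)) with ⟨s, hs⟩
  exact ⟨s, ⟨s, hs, rfl⟩⟩

lemma le_qdist {x y : QS S} {s : S} (h : x.1 s ≠ y.1 s) : (s : ℝ) ≤ qdist S x y :=
  le_csSup (diff_finite x y).bddAbove ⟨s, h, rfl⟩

lemma qdist_le {x y : QS S} {r : ℝ} (hr : 0 ≤ r)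
    (h : ∀ s : S, x.1 s ≠ y.1 s → (s : ℝ) ≤ r) : qdist S x y ≤ r := by
  rcases eq_or_ne x y with rfl | hne
  · rw [qdist_self]; exact hr
  · apply csSup_le
    · rcases qdist_mem hne with ⟨s, hs, _⟩; exact ⟨s, s, hs, rfl⟩
    · rintro t ⟨s, hs, rfl⟩; exact h s hs

lemma qdist_memS {x y : QS S} (h : x ≠ y) : qdist S x y ∈ S := by
  rcases qdist_mem h with ⟨s, _, hv⟩; rw [← hv]; exact s.2

lemma qdist_nonneg (hpos : S ⊆ Set.Ioi 0) (x y : QS S) : 0 ≤ qdist S x y := by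
  rcases eq_or_ne x y with rfl | hne
  · rw [qdist_self]
  · exact le_of_lt (hpos (qdist_memS hne))

lemma qdist_eq_zero (hpos : S ⊆ Set.Ioi 0) {x y : QS S} (h : qdist S x y = 0) : x = y := by
  by_contra hne
  exact absurd (h ▸ hpos (qdist_memS hne)) (by simp)

lemma qdist_ultra (hpos : S ⊆ Set.Ioi 0) (x y z : QS S) :
    qdist S x z ≤ max (qdist S x y) (qdist S y z) := by
  apply qdist_le (le_max_of_le_left (qdist_nonneg hpos x y))
  intro s hs
  rcases eq_or_ne (x.1 s) (y.1 s) with h1 | h1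
  · exact le_max_of_le_right (le_qdist (fun hc => hs (h1.trans hc)))
  · exact le_max_of_le_left (le_qdist h1)

noncomputable def qsMetric (hpos : S ⊆ Set.Ioi 0) : MetricSpace (QS S) where
  dist := qdist S
  dist_self := qdist_self
  dist_comm := qdist_comm
  dist_triangle x y z := by
    refine (qdist_ultra hpos x y z).trans ?_
    exact max_le (le_add_of_nonneg_right (qdist_nonneg hpos y z))
      (le_add_of_nonneg_left (qdist_nonneg hpos x y))
  eq_of_dist_eq_zero := qdist_eq_zero hpos



lemma list_exists_min {α : Type*} (f : α → ℝ) :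
    ∀ (l : List α), l ≠ [] → ∃ a ∈ l, ∀ b ∈ l, f a ≤ f b := by
  intro l
  induction l with
  | nil => intro h; exact absurd rfl h
  | cons a t ih =>
    intro _
    rcases eq_or_ne t [] with rfl | ht
    · exact ⟨a, by simp, by simp⟩
    · rcases ih ht with ⟨b, hb, hmin⟩
      rcases le_total (f a) (f b) with h | h
      · exact ⟨a, by simp, by
          intro c hc
          rcases List.mem_cons.1 hc with rfl | hc
          · exact le_refl _
          · exact h.trans (hmin c hc)⟩
      · exact ⟨b, List.mem_cons_of_mem _ hb, by
          intro c hc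
          rcases List.mem_cons.1 hc with rfl | hc
          · exact h
          · exact hmin c hc⟩

lemma le_foldr_max : ∀ (l : List ℕ) (a : ℕ), a ∈ l → a ≤ l.foldr max 0 := by
  intro l
  induction l with
  | nil => simp
  | cons b t ih =>
    intro a ha
    rcases List.mem_cons.1 ha with rfl | ha
    · exact le_max_left _ _
    · exact (ih a ha).trans (le_max_right _ _)


end Aux17

namespace Aux17
variable {S : Set ℝ}

section Forth
variable {M : Type*} [MetricSpace M]

/-- partial isometry as a list of matched pairs -/
def Ok (S : Set ℝ) (l : List (M × QS S)) : Prop :=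
  ∀ p ∈ l, ∀ q ∈ l, qdist S p.2 q.2 = dist p.1 q.1

lemma Ok.cons {l : List (M × QS S)} (hl : Ok S l) {m : M} {q : QS S}
    (h : ∀ p ∈ l, qdist S q p.2 = dist m p.1) : Ok S ((m, q) :: l) := by
  intro p hp p' hp'
  rcases List.mem_cons.1 hp with rfl | hp <;> rcases List.mem_cons.1 hp' with rfl | hp'
  · simp [qdist_self]
  · exact h _ hp'
  · rw [qdist_comm, dist_comm]; exact h _ hp
  · exact hl _ hp _ hp'

lemma forth (hpos : S ⊆ Set.Ioi 0) (hultM : ∀ x y z : M, dist x z ≤ max (dist x y) (dist y z))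
    (hdistS : ∀ x y : M, x ≠ y → dist x y ∈ S)
    (l : List (M × QS S)) (hl : Ok S l) (m : M) :
    ∃ q : QS S, Ok S ((m, q) :: l) := by
  by_cases hex : ∃ p ∈ l, p.1 = m
  · rcases hex with ⟨p, hp, rfl⟩
    exact ⟨p.2, hl.cons (fun p' hp' => hl p hp p' hp')⟩
  rcases eq_or_ne l [] with rfl | hne
  · exact ⟨⟨fun _ => 0, by simp [Function.support]⟩, by
      refine Ok.cons (fun p hp => absurd hp (by simp)) (fun p hp => absurd hp (by simp))⟩
  push_neg at hex
  rcases list_exists_min (fun p : M × QS S => dist m p.1) l hne with ⟨p0, hp0, hmin⟩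
  set r0 : ℝ := dist m p0.1 with hr0
  have hr0S : r0 ∈ S := hdistS m p0.1 (fun h => hex p0 hp0 h.symm)
  have hr0pos : 0 < r0 := hpos hr0S
  set s0 : S := ⟨r0, hr0S⟩ with hs0
  set N : ℕ := (l.map (fun p : M × QS S => p.2.1 s0)).foldr max 0 + 1 with hN
  have hNne : ∀ p ∈ l, p.2.1 s0 ≠ N := by
    intro p hp hc
    have := le_foldr_max _ (p.2.1 s0) (List.mem_map_of_mem (f := fun p : M × QS S => p.2.1 s0) hp)
    omega
  refine ⟨⟨fun s => if s = s0 then N else p0.2.1 s, ?_⟩, ?_⟩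
  · apply Set.Finite.subset (p0.2.2.union (Set.finite_singleton s0))
    intro s hs
    simp only [Function.mem_support] at hs
    rcases eq_or_ne s s0 with rfl | h
    · exact Or.inr rfl
    · left; simp only [Function.mem_support]; simpa [h] using hs
  set q : QS S := ⟨fun s => if s = s0 then N else p0.2.1 s, _⟩ with hq
  apply hl.cons
  intro p hp
  have hqs0 : q.1 s0 = N := by simp [hq]
  have hqs : ∀ s : S, s ≠ s0 → q.1 s = p0.2.1 s := by intro s h; simp [hq, h]
  have hD : qdist S p0.2 p.2 = dist p0.1 p.1 := hl p0 hp0 p hp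
  have hmle : dist m p.1 ≤ max r0 (qdist S p0.2 p.2) := by
    rw [hD]; exact hultM m p0.1 p.1
  have hr0le : r0 ≤ dist m p.1 := hmin p hp
  rcases le_or_gt (qdist S p0.2 p.2) r0 with hc | hc
  · -- dist m p.1 = r0
    have hmr : dist m p.1 = r0 :=
      le_antisymm (hmle.trans (by rw [max_eq_left hc])) hr0le
    rw [hmr]
    apply le_antisymm
    · apply qdist_le hr0pos.le
      intro s hs
      rcases eq_or_ne s s0 with rfl | h
      · exact le_of_eq rfl
      · rw [hqs s h] at hs
        exact (le_qdist hs).trans hc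
    · have : q.1 s0 ≠ p.2.1 s0 := by rw [hqs0]; exact fun h => hNne p hp h.symm
      exact le_qdist this
  · -- dist m p.1 = qdist p0.2 p.2
    have hmr : dist m p.1 = qdist S p0.2 p.2 := by
      apply le_antisymm (hmle.trans (by rw [max_eq_right hc.le]))
      rw [hD]
      calc dist p0.1 p.1 ≤ max (dist p0.1 m) (dist m p.1) := hultM _ _ _
        _ ≤ dist m p.1 := by
            rw [dist_comm p0.1 m]
            exact max_le hr0le (le_refl _)
    rw [hmr]
    have hne02 : p0.2 ≠ p.2 := by
      intro h
      rw [h, qdist_self] at hc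
      exact absurd (hr0pos.trans hc) (lt_irrefl _)
    apply le_antisymm
    · apply qdist_le (hr0pos.trans hc).le
      intro s hs
      rcases eq_or_ne s s0 with rfl | h
      · exact hc.le
      · rw [hqs s h] at hs
        exact le_qdist hs
    · rcases qdist_mem hne02 with ⟨s, hsmem, hsval⟩
      have hsne : s ≠ s0 := by
        intro h
        rw [h] at hsval
        exact absurd (hsval ▸ hc) (lt_irrefl _)
      apply hsval ▸ le_qdist
      rw [hqs s hsne]
      exact hsmem


lemma back (hpos : S ⊆ Set.Ioi 0) [Nonempty M]
    (huniv : ∀ (X : Type) [MetricSpace X] [Finite X],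
      (∀ a b c : X, dist a c ≤ max (dist a b) (dist b c)) →
      (∀ a b : X, a ≠ b → dist a b ∈ S) →
      ∃ e : X → M, ∀ a b : X, dist (e a) (e b) = dist a b)
    (hhom : ∀ F : Set M, F.Finite → ∀ φ : F → M,
      (∀ a b : F, dist (φ a) (φ b) = dist a.1 b.1) →
      ∃ Φ : M ≃ M, (∀ x y : M, dist (Φ x) (Φ y) = dist x y) ∧
        ∀ a : F, Φ a.1 = φ a)
    (l : List (M × QS S)) (hl : Ok S l) (y : QS S) :
    ∃ m : M, Ok S ((m, y) :: l) := by
  classical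
  letI : MetricSpace (QS S) := qsMetric hpos
  have hdq : ∀ a b : QS S, dist a b = qdist S a b := fun _ _ => rfl
  set T : Set (QS S) := {z | z ∈ y :: l.map Prod.snd} with hTdef
  have hT : T.Finite := (y :: l.map Prod.snd).finite_toSet
  haveI : Finite T := hT.to_subtype
  have hultX : ∀ a b c : T, dist a c ≤ max (dist a b) (dist b c) := by
    intro a b c
    rw [Subtype.dist_eq, Subtype.dist_eq, Subtype.dist_eq, hdq, hdq, hdq]
    exact qdist_ultra hpos _ _ _
  have hSX : ∀ a b : T, a ≠ b → dist a b ∈ S := by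
    intro a b hne
    rw [Subtype.dist_eq, hdq]
    exact qdist_memS (Subtype.coe_injective.ne hne)
  obtain ⟨e, he⟩ := huniv T hultX hSX
  have heinj : Function.Injective e := by
    intro a b h
    have : dist a b = 0 := by rw [← he, h, dist_self]
    exact dist_eq_zero.1 this
  -- the M-side partner of an element of QS S occurring in l
  set partner : QS S → M := fun z =>
    if h : ∃ p, p ∈ l ∧ p.2 = z then h.choose.1 else Classical.arbitrary M
    with hpartnerdef
  have hpartner : ∀ p ∈ l, partner p.2 = p.1 := by
    intro p hp
    have h : ∃ p', p' ∈ l ∧ p'.2 = p.2 := ⟨p, hp, rfl⟩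
    rw [hpartnerdef]
    simp only [dif_pos h]
    have hspec := h.choose_spec
    have : dist h.choose.1 p.1 = 0 := by
      rw [← hl h.choose hspec.1 p hp, hspec.2, qdist_self]
    exact dist_eq_zero.1 this
  set A : Set T := {x : T | (x : QS S) ∈ l.map Prod.snd} with hAdef
  set F : Set M := e '' A with hFdef
  have hF : F.Finite := (Set.toFinite A).image e
  set φ : F → M := fun v => partner (v.2.choose : T).1 with hφdef
  have hφv : ∀ (x : T) (hx : x ∈ A) (hv : e x ∈ F), φ ⟨e x, hv⟩ = partner x.1 := by
    intro x hx hv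
    have hspec := hv.choose_spec
    have : hv.choose = x := heinj hspec.2
    rw [hφdef]
    simp only []
    rw [this]
  have hpartval : ∀ (x : T), x ∈ A → qdist S y (x : QS S) = dist (partner x.1) (partner x.1) ∨ True := fun _ _ => Or.inr trivial
  have hAval : ∀ (x : T), x ∈ A → ∃ p ∈ l, p.2 = (x : QS S) := by
    intro x hx
    rcases List.mem_map.1 hx with ⟨p, hp, hpe⟩
    exact ⟨p, hp, hpe⟩
  have hφiso : ∀ v w : F, dist (φ v) (φ w) = dist v.1 w.1 := by
    intro v w
    have hsv := v.2.choose_spec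
    have hsw := w.2.choose_spec
    rcases hAval _ hsv.1 with ⟨p, hp, hpe⟩
    rcases hAval _ hsw.1 with ⟨p', hp', hpe'⟩
    have h1 : φ v = p.1 := by
      show partner _ = _
      rw [← hpe, hpartner p hp]
    have h2 : φ w = p'.1 := by
      show partner _ = _
      rw [← hpe', hpartner p' hp']
    rw [h1, h2, ← hl p hp p' hp', ← hsv.2, ← hsw.2, he, Subtype.dist_eq, hdq, hpe, hpe']
  obtain ⟨Φ, hΦd, hΦfix⟩ := hhom F hF φ hφiso
  have hyT : y ∈ T := by simp [hTdef]
  set yX : T := ⟨y, hyT⟩ with hyX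
  refine ⟨Φ (e yX), hl.cons ?_⟩
  intro p hp
  have hpT : p.2 ∈ T := by
    simp only [hTdef, Set.mem_setOf_eq, List.mem_cons]
    exact Or.inr (List.mem_map_of_mem (f := Prod.snd) hp)
  set xp : T := ⟨p.2, hpT⟩ with hxp
  have hxpA : xp ∈ A := by
    simp only [hAdef, Set.mem_setOf_eq]
    exact List.mem_map_of_mem (f := Prod.snd) hp
  have hvF : e xp ∈ F := ⟨xp, hxpA, rfl⟩
  have hΦxp : Φ (e xp) = p.1 := by
    have := hΦfix ⟨e xp, hvF⟩
    rw [this, hφv xp hxpA hvF]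
    exact hpartner p hp
  rw [← hΦxp, hΦd, he, Subtype.dist_eq, hdq]

end Forth
end Aux17

/-- Uniqueness of the Urysohn space: any countable metric
space `M` which is ultrahomogeneous and whose finite subspaces are, up to
isometry, exactly the finite ultrametric spaces with nonzero distances in
`S`, is isometric to `Q_S`. -/
theorem stmt17 (S : Set ℝ) (hpos : S ⊆ Set.Ioi 0) (hcount : S.Countable)
    (M : Type*) [MetricSpace M] [Countable M]
    (hult : ∀ x y z : M, dist x z ≤ max (dist x y) (dist y z))
    (hdistS : ∀ x y : M, x ≠ y → dist x y ∈ S)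
    (huniv : ∀ (X : Type) [MetricSpace X] [Finite X],
      (∀ a b c : X, dist a c ≤ max (dist a b) (dist b c)) →
      (∀ a b : X, a ≠ b → dist a b ∈ S) →
      ∃ e : X → M, ∀ a b : X, dist (e a) (e b) = dist a b)
    (hhom : ∀ F : Set M, F.Finite → ∀ φ : F → M,
      (∀ a b : F, dist (φ a) (φ b) = dist a.1 b.1) →
      ∃ Φ : M ≃ M, (∀ x y : M, dist (Φ x) (Φ y) = dist x y) ∧
        ∀ a : F, Φ a.1 = φ a) :
    ∃ g : M → QS S, Function.Bijective g ∧
      ∀ x y : M, qdist S (g x) (g y) = dist x y := by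
  classical
  -- M is nonempty
  haveI : Nonempty M := by
    obtain ⟨e, -⟩ := huniv PUnit (by simp) (by intro a b h; exact absurd rfl h)
    exact ⟨e PUnit.unit⟩
  -- QS S is countable and nonempty
  haveI : Countable S := hcount.to_subtype
  haveI : Countable (QS S) := by
    have hj : Function.Injective (fun x : QS S =>
        (⟨x.2.toFinset, x.1, fun a => by
            simp [Set.Finite.mem_toFinset, Function.mem_support]⟩ : S →₀ ℕ)) := by
      intro x y h
      exact Subtype.ext (congrArg Finsupp.toFun h)
    exact hj.countable
  haveI : Nonempty (QS S) := ⟨⟨fun _ => 0, by simp [Function.support]⟩⟩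
  obtain ⟨a, ha⟩ := exists_surjective_nat M
  obtain ⟨b, hb⟩ := exists_surjective_nat (QS S)
  -- one combined extension step
  have stepex : ∀ L : {l : List (M × QS S) // Aux17.Ok S l}, ∀ (m : M) (y : QS S),
      ∃ L' : {l : List (M × QS S) // Aux17.Ok S l},
        (∃ q, (m, q) ∈ L'.1) ∧ (∃ mm, (mm, y) ∈ L'.1) ∧ ∀ p ∈ L.1, p ∈ L'.1 := by
    intro L m y
    obtain ⟨q, hq⟩ := Aux17.forth hpos hult hdistS L.1 L.2 m
    obtain ⟨mm, hmm⟩ := Aux17.back hpos huniv hhom ((m, q) :: L.1) hq y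
    refine ⟨⟨(mm, y) :: (m, q) :: L.1, hmm⟩, ⟨q, ?_⟩, ⟨mm, ?_⟩, ?_⟩
    · simp
    · simp
    · intro p hp; simp [hp]
  choose step h1 h2 h3 using stepex
  set G : ℕ → {l : List (M × QS S) // Aux17.Ok S l} :=
    fun n => Nat.rec ⟨[], fun p hp => absurd hp (List.not_mem_nil (a := p))⟩
      (fun n L => step L (a n) (b n)) n with hG
  have hGsucc : ∀ n, G (n + 1) = step (G n) (a n) (b n) := fun n => rfl
  have hmono : ∀ n k, ∀ p ∈ (G n).1, p ∈ (G (n + k)).1 := by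
    intro n k
    induction k with
    | zero => intro p hp; exact hp
    | succ k ih =>
      intro p hp
      have := ih p hp
      rw [show n + (k + 1) = (n + k) + 1 from rfl, hGsucc]
      exact h3 _ _ _ p this
  have hjoint : ∀ (p : M × QS S) (n : ℕ), p ∈ (G n).1 →
      ∀ (p' : M × QS S) (n' : ℕ), p' ∈ (G n').1 →
      qdist S p.2 p'.2 = dist p.1 p'.1 := by
    intro p n hp p' n' hp'
    have hp1 : p ∈ (G (n + n')).1 := hmono n n' p hp
    have hp2 : p' ∈ (G (n + n')).1 := by
      rw [Nat.add_comm]; exact hmono n' n p' hp'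
    exact (G (n + n')).2 p hp1 p' hp2
  have hcovM : ∀ n, ∃ q, (a n, q) ∈ (G (n + 1)).1 := by
    intro n; rw [hGsucc]; exact h1 _ _ _
  have hcovQ : ∀ n, ∃ mm, (mm, b n) ∈ (G (n + 1)).1 := by
    intro n; rw [hGsucc]; exact h2 _ _ _
  have hgex : ∀ x : M, ∃ q, ∃ n, (x, q) ∈ (G n).1 := by
    intro x
    obtain ⟨n, rfl⟩ := ha x
    obtain ⟨q, hq⟩ := hcovM n
    exact ⟨q, n + 1, hq⟩
  choose g hg using hgex
  have hiso : ∀ x y : M, qdist S (g x) (g y) = dist x y := by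
    intro x y
    obtain ⟨n, hn⟩ := hg x
    obtain ⟨n', hn'⟩ := hg y
    exact hjoint _ n hn _ n' hn'
  refine ⟨g, ⟨?_, ?_⟩, hiso⟩
  · intro x y h
    have := hiso x y
    rw [h, Aux17.qdist_self] at this
    exact dist_eq_zero.1 this.symm
  · intro y
    obtain ⟨n, rfl⟩ := hb y
    obtain ⟨mm, hmm⟩ := hcovQ n
    obtain ⟨k, hk⟩ := hg mm
    refine ⟨mm, ?_⟩
    have := hjoint (mm, g mm) k hk (mm, b n) (n + 1) hmm
    rw [dist_self] at this
    exact Aux17.qdist_eq_zero hpos this
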